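/- Let f, g : [0,1] → [0,1]² be continuous functions such that f(0) = (0,0), f(1) = (1,1), g(0) = (0,1) and g(1) = (1,0). Then the curves range(f) and range(g) intersect, i.e., there exist s, t ∈ [0,1] with f(s) = g(t). -/

import Mathlib

open Set

noncomputable section

/-- The Euclidean plane. -/
abbrev E2 := EuclideanSpace ℝ (Fin 2)

/-- The point `(x, y)` of the Euclidean plane. -/
def pt (x y : ℝ) : E2 := WithLp.toLp 2 ![x, y]

/-- The closed unit square `[0,1]²`. -/
def unitSq : Set E2 := {p | p 0 ∈ Icc (0:ℝ) 1 ∧ p 1 ∈ Icc (0:ℝ) 1}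

/-- The open unit square `(0,1)²`. -/
def openUnitSq : Set E2 := {p | p 0 ∈ Ioo (0:ℝ) 1 ∧ p 1 ∈ Ioo (0:ℝ) 1}

open Complex Real

set_option maxHeartbeats 1000000

/-- Confinement in an open quadrant strip. -/
lemma conf_open {d : ℝ → ℝ} (hd : ContinuousOn d (Icc 0 1))
    (h : ∀ t ∈ Icc (0:ℝ) 1, 0 < Real.cos (d t)) (h0 : |d 0| < π / 2) :
    ∀ t ∈ Icc (0:ℝ) 1, |d t| < π / 2 := by
  intro t ht
  by_contra hcon
  push_neg at hcon
  have hsub : Icc (0:ℝ) t ⊆ Icc 0 1 := Icc_subset_Icc le_rfl ht.2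
  have hd' : ContinuousOn d (Icc 0 t) := hd.mono hsub
  rcases le_abs.mp hcon with hc1 | hc2
  · obtain ⟨s, hs, hds⟩ := intermediate_value_Icc ht.1 hd'
      (⟨(abs_lt.mp h0).2.le, hc1⟩ : π / 2 ∈ Icc (d 0) (d t))
    have := h s (hsub hs)
    rw [hds, Real.cos_pi_div_two] at this
    exact lt_irrefl _ this
  · obtain ⟨s, hs, hds⟩ := intermediate_value_Icc' ht.1 hd'
      (⟨by linarith, (abs_lt.mp h0).1.le⟩ : -(π / 2) ∈ Icc (d t) (d 0))
    have := h s (hsub hs)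
    rw [hds, Real.cos_neg, Real.cos_pi_div_two] at this
    exact lt_irrefl _ this

/-- Confinement in the closed first quadrant. -/
lemma conf_closed {d : ℝ → ℝ} (hd : ContinuousOn d (Icc 0 1))
    (hs : ∀ t ∈ Icc (0:ℝ) 1, 0 ≤ Real.sin (d t))
    (hc : ∀ t ∈ Icc (0:ℝ) 1, 0 ≤ Real.cos (d t))
    (h0 : d 0 ∈ Icc 0 (π / 2)) :
    ∀ t ∈ Icc (0:ℝ) 1, d t ∈ Icc 0 (π / 2) := by
  have hπ := Real.pi_pos
  intro t ht
  have hsub : Icc (0:ℝ) t ⊆ Icc 0 1 := Icc_subset_Icc le_rfl ht.2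
  have hd' : ContinuousOn d (Icc 0 t) := hd.mono hsub
  constructor
  · by_contra hcon
    push_neg at hcon
    set c := max (d t) (-(π/4)) with hcdef
    have hc1 : c < 0 := max_lt hcon (by linarith)
    have hc2 : -π < c := lt_of_lt_of_le (by linarith) (le_max_right _ _)
    obtain ⟨s, hsm, hds⟩ := intermediate_value_Icc' ht.1 hd'
      (⟨le_max_left _ _, by linarith [h0.1]⟩ : c ∈ Icc (d t) (d 0))
    have : Real.sin c < 0 := Real.sin_neg_of_neg_of_neg_pi_lt hc1 hc2
    have := hs s (hsub hsm)
    rw [hds] at this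
    linarith
  · by_contra hcon
    push_neg at hcon
    set c := min (d t) (3*π/4) with hcdef
    have hc1 : π/2 < c := lt_min hcon (by linarith)
    have hc2 : c < π + π/2 := lt_of_le_of_lt (min_le_right _ _) (by linarith)
    obtain ⟨s, hsm, hds⟩ := intermediate_value_Icc ht.1 hd'
      (⟨by linarith [h0.2], min_le_left _ _⟩ : c ∈ Icc (d 0) (d t))
    have : Real.cos c < 0 := Real.cos_neg_of_pi_div_two_lt_of_lt hc1 hc2
    have := hc s (hsub hsm)
    rw [hds] at this
    linarith

lemma exp_arg_eq {z : ℂ} (hz : z ≠ 0) :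
    Complex.exp (z.arg * Complex.I) = z / ‖z‖ := by
  have h := Complex.norm_mul_exp_arg_mul_I z
  have ha : (‖z‖ : ℂ) ≠ 0 := by
    simpa using (norm_ne_zero_iff.mpr hz)
  field_simp
  rw [mul_comm] at h
  exact h

lemma unit_mul {z w : ℂ} (hz : z ≠ 0) (hw : w ≠ 0) :
    z / (‖z‖ : ℂ) * (w / z / ((‖w‖ : ℂ) / (‖z‖ : ℂ)))
      = w / (‖w‖ : ℂ) := by
  have h1 : (‖z‖ : ℂ) ≠ 0 := by
    simpa using norm_ne_zero_iff.mpr hz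
  have h2 : (‖w‖ : ℂ) ≠ 0 := by
    simpa using norm_ne_zero_iff.mpr hw
  field_simp

/-- 1-D argument lifting along a path. -/
lemma exists_lift {γ : ℝ → ℂ} (hγ : ContinuousOn γ (Icc 0 1))
    (hne : ∀ t ∈ Icc (0:ℝ) 1, γ t ≠ 0) {θ₀ : ℝ}
    (h0 : Complex.exp (θ₀ * Complex.I) = γ 0 / ‖γ 0‖) :
    ∃ θ : ℝ → ℝ, ContinuousOn θ (Icc 0 1) ∧ θ 0 = θ₀ ∧
      ∀ t ∈ Icc (0:ℝ) 1, Complex.exp (θ t * Complex.I) = γ t / ‖γ t‖ := by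
  obtain ⟨t₀, ht₀, hmin⟩ := isCompact_Icc.exists_isMinOn (nonempty_Icc.mpr zero_le_one)
    (continuous_norm.comp_continuousOn hγ)
  set ε := ‖γ t₀‖ with hεdef
  have hε : 0 < ε := norm_pos_iff.mpr (hne t₀ ht₀)
  have hminle : ∀ x ∈ Icc (0:ℝ) 1, ε ≤ ‖γ x‖ := fun x hx => hmin hx
  have huc := isCompact_Icc.uniformContinuousOn_of_continuous hγ
  rw [Metric.uniformContinuousOn_iff] at huc
  obtain ⟨δ, hδ, hδ'⟩ := huc ε hε
  obtain ⟨n, hn⟩ := exists_nat_one_div_lt hδ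
  set N : ℕ := n + 1 with hNdef
  have hN : (0:ℝ) < N := by positivity
  have hNδ : 1 / (N:ℝ) < δ := by exact_mod_cast hn
  have claim : ∀ k : ℕ, k ≤ N → ∃ θ : ℝ → ℝ,
      ContinuousOn θ (Icc 0 ((k:ℝ)/N)) ∧ θ 0 = θ₀ ∧
      ∀ t ∈ Icc (0:ℝ) ((k:ℝ)/N),
        Complex.exp (θ t * Complex.I) = γ t / ‖γ t‖ := by
    intro k
    induction k with
    | zero =>
      intro _
      refine ⟨fun _ => θ₀, continuousOn_const, rfl, ?_⟩
      intro t ht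
      simp only [Nat.cast_zero, zero_div] at ht
      have : t = 0 := le_antisymm ht.2 ht.1
      rw [this]; exact h0
    | succ k ih =>
      intro hk1
      obtain ⟨θ, hθc, hθ0, hθ⟩ := ih (Nat.le_of_succ_le hk1)
      set a : ℝ := (k:ℝ)/N with hadef
      set b : ℝ := ((k+1:ℕ):ℝ)/N with hbdef
      have hka : (0:ℝ) ≤ a := by positivity
      have hab : a ≤ b := by
        rw [hadef, hbdef, div_le_div_iff_of_pos_right hN]
        push_cast; linarith
      have hba : b - a = 1 / N := by
        rw [hadef, hbdef]; push_cast; field_simp; ring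
      have hb1 : b ≤ 1 := by
        rw [hbdef, div_le_one hN]; exact_mod_cast hk1
      have ha1 : a ≤ 1 := le_trans hab hb1
      have haI : a ∈ Icc (0:ℝ) 1 := ⟨hka, ha1⟩
      have hmemM : ∀ t ∈ Icc (0:ℝ) b, max t a ∈ Icc (0:ℝ) 1 :=
        fun t ht => ⟨le_trans hka (le_max_right _ _), max_le (le_trans ht.2 hb1) ha1⟩
      have hmemm : ∀ t ∈ Icc (0:ℝ) b, min t a ∈ Icc (0:ℝ) a :=
        fun t ht => ⟨le_min ht.1 hka, min_le_right _ _⟩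
      have hγa : γ a ≠ 0 := hne a haI
      have haabs : (0:ℝ) < ‖γ a‖ := norm_pos_iff.mpr hγa
      set u : ℝ → ℂ := fun t => γ (max t a) / γ a with hudef
      have hclose : ∀ t ∈ Icc (0:ℝ) b, ‖γ (max t a) - γ a‖ < ε := by
        intro t ht
        have h0M : (0:ℝ) ≤ max t a - a := sub_nonneg.mpr (le_max_right _ _)
        have hd1 : dist (max t a) a < δ := by
          rw [Real.dist_eq, _root_.abs_of_nonneg h0M]
          have h2 : max t a ≤ b := max_le ht.2 hab
          have : max t a - a ≤ 1 / N := by rw [← hba]; linarith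
          exact lt_of_le_of_lt this hNδ
        have := hδ' (max t a) (hmemM t ht) a haI hd1
        rwa [Complex.dist_eq] at this
      have hu1 : ∀ t ∈ Icc (0:ℝ) b, ‖u t - 1‖ < 1 := by
        intro t ht
        have heq : u t - 1 = (γ (max t a) - γ a) / γ a := by
          rw [hudef]; field_simp
        rw [heq, norm_div, div_lt_one haabs]
        exact lt_of_lt_of_le (hclose t ht) (hminle a haI)
      have hure : ∀ t ∈ Icc (0:ℝ) b, 0 < (u t).re := by
        intro t ht
        have h1 : (u t).re = 1 + (u t - 1).re := by simp
        have h2 : -‖u t - 1‖ ≤ (u t - 1).re :=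
          neg_le_of_abs_le (Complex.abs_re_le_norm _)
        have := hu1 t ht
        rw [h1]; linarith
      have huc2 : ContinuousOn u (Icc 0 b) :=
        ContinuousOn.div_const
          (hγ.comp ((continuous_id.max continuous_const).continuousOn) hmemM) _
      refine ⟨fun t => θ (min t a) + Complex.arg (u t), ?_, ?_, ?_⟩
      · apply ContinuousOn.add
        · exact hθc.comp ((continuous_id.min continuous_const).continuousOn) hmemm
        · intro t ht
          exact (Complex.continuousAt_arg
            (Complex.mem_slitPlane_iff.mpr (Or.inl (hure t ht)))).comp_continuousWithinAt
            (huc2 t ht)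
      · have hm0 : min (0:ℝ) a = 0 := min_eq_left hka
        have hM0 : max (0:ℝ) a = a := max_eq_right hka
        simp only [hm0, hθ0, hudef, hM0, div_self hγa, Complex.arg_one, add_zero]
      · intro t ht
        have hut : u t ≠ 0 := by
          intro h
          have := hu1 t ht
          rw [h] at this; simp at this
        have hγt : γ t ≠ 0 := hne t ⟨ht.1, ht.2.trans hb1⟩
        have hexp : Complex.exp (((θ (min t a) + Complex.arg (u t) : ℝ) : ℂ) * Complex.I)
            = Complex.exp ((θ (min t a) : ℂ) * Complex.I)
              * Complex.exp (((Complex.arg (u t) : ℝ) : ℂ) * Complex.I) := by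
          push_cast
          rw [add_mul, Complex.exp_add]
        rw [hexp, exp_arg_eq hut]
        rcases le_total t a with hta | hat
        · have hm : min t a = t := min_eq_left hta
          have hM : max t a = a := max_eq_right hta
          have hu : u t = 1 := by rw [hudef]; simp only [hM]; exact div_self hγa
          have hkey := hθ t ⟨ht.1, hta⟩
          rw [hm, hu, hkey]
          simp
        · have hm : min t a = a := min_eq_right hat
          have hM : max t a = t := max_eq_left hat
          have hkey := hθ a ⟨hka, le_rfl⟩
          have h1 : ‖γ t‖ ≠ 0 := ne_of_gt (norm_pos_iff.mpr hγt)
          have h2 : ‖γ a‖ ≠ 0 := ne_of_gt haabs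
          rw [hm, hkey, hudef]
          simp only [hM]
          rw [norm_div]
          push_cast
          exact unit_mul hγa hγt
  obtain ⟨θ, hc, h00, hp⟩ := claim N le_rfl
  rw [div_self (ne_of_gt hN)] at hc hp
  exact ⟨θ, hc, h00, hp⟩


lemma unit_dist {a b : ℂ} (ha : a ≠ 0) (hb : b ≠ 0) :
    ‖a / ‖a‖ - b / ‖b‖‖
      ≤ 2 * ‖a - b‖ / ‖a‖ := by
  have ha' : (‖a‖ : ℂ) ≠ 0 := by simpa using norm_ne_zero_iff.mpr ha
  have hb' : (‖b‖ : ℂ) ≠ 0 := by simpa using norm_ne_zero_iff.mpr hb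
  have hapos : 0 < ‖a‖ := norm_pos_iff.mpr ha
  have hbpos : 0 < ‖b‖ := norm_pos_iff.mpr hb
  have key : a / (‖a‖ : ℂ) - b / (‖b‖ : ℂ)
      = (a - b) / (‖a‖ : ℂ)
        + b / (‖b‖ : ℂ)
          * (((‖b‖ : ℝ) - (‖a‖ : ℝ) : ℝ) / (‖a‖ : ℂ)) := by
    push_cast
    field_simp
    ring
  rw [key]
  refine le_trans (norm_add_le _ _) ?_
  have h1 : ‖(a - b) / (‖a‖ : ℂ)‖ = ‖a - b‖ / ‖a‖ := by
    rw [norm_div, Complex.norm_real, Real.norm_eq_abs, _root_.abs_of_nonneg hapos.le]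
  have h2 : ‖b / (‖b‖ : ℂ)‖ = 1 := by
    rw [norm_div, Complex.norm_real, Real.norm_eq_abs, _root_.abs_of_nonneg hbpos.le, div_self (ne_of_gt hbpos)]
  have habs : ‖a - b‖ = ‖b - a‖ := by
    rw [norm_sub_rev]
  have h3 : ‖(((‖b‖ : ℝ) : ℂ) - ((‖a‖ : ℝ) : ℂ)) / (‖a‖ : ℂ)‖
      ≤ ‖a - b‖ / ‖a‖ := by
    rw [← Complex.ofReal_sub, norm_div, Complex.norm_real, Real.norm_eq_abs, Complex.norm_real, Real.norm_eq_abs,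
      _root_.abs_of_nonneg hapos.le, habs]
    gcongr
    exact abs_norm_sub_norm_le b a
  rw [norm_mul, h1, h2, one_mul]
  have h4 : ‖↑(‖b‖ - ‖a‖) / (‖a‖ : ℂ)‖
      = ‖(((‖b‖ : ℝ) : ℂ) - ((‖a‖ : ℝ) : ℂ)) / (‖a‖ : ℂ)‖ := by
    norm_cast
  have h5 : 2 * ‖a - b‖ / ‖a‖
      = ‖a - b‖ / ‖a‖ + ‖a - b‖ / ‖a‖ := by ring
  rw [h4, h5]
  linarith

lemma lift_close {d : ℝ → ℝ} {u : ℝ → ℂ} {η : ℝ}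
    (hd : ContinuousOn d (Icc 0 1))
    (hexp : ∀ t ∈ Icc (0:ℝ) 1, Complex.exp ((d t : ℝ) * Complex.I) = u t)
    (hη : 0 < η) (hη2 : η ≤ π / 2)
    (hu : ∀ t ∈ Icc (0:ℝ) 1, ‖u t - 1‖ < Real.sin η)
    (h0 : |d 0| < π / 2) :
    ∀ t ∈ Icc (0:ℝ) 1, |d t| < η := by
  have hπ := Real.pi_pos
  have hcos : ∀ t ∈ Icc (0:ℝ) 1, 0 < Real.cos (d t) := by
    intro t ht
    have h1 : Real.cos (d t) = (u t).re := by
      rw [← hexp t ht, Complex.exp_ofReal_mul_I_re]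
    have h2 : (u t).re = 1 + (u t - 1).re := by simp
    have h3 : -(‖u t - 1‖) ≤ (u t - 1).re :=
      neg_le_of_abs_le (Complex.abs_re_le_norm _)
    have h4 := hu t ht
    have h5 := Real.sin_le_one η
    rw [h1, h2]; linarith
  have hconf := conf_open hd hcos h0
  intro t ht
  by_contra hcon
  push_neg at hcon
  have hsin : |Real.sin (d t)| < Real.sin η := by
    have h1 : Real.sin (d t) = (u t).im := by
      rw [← hexp t ht, Complex.exp_ofReal_mul_I_im]
    have h2 : (u t).im = (u t - 1).im := by simp
    have h3 : |(u t - 1).im| ≤ ‖u t - 1‖ := Complex.abs_im_le_norm _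
    rw [h1, h2]
    exact lt_of_le_of_lt h3 (hu t ht)
  have hdt := hconf t ht
  have h5 : Real.sin η ≤ Real.sin |d t| := by
    refine Real.strictMonoOn_sin.monotoneOn ⟨by linarith, hη2⟩
      ⟨by linarith [abs_nonneg (d t)], hdt.le⟩ hcon
  have h6 : Real.sin |d t| = |Real.sin (d t)| := by
    rcases le_or_gt 0 (d t) with h | h
    · rw [_root_.abs_of_nonneg h,
        _root_.abs_of_nonneg (Real.sin_nonneg_of_nonneg_of_le_pi h (by linarith [abs_le.mp hdt.le]))]
    · have hd0 : -π ≤ d t := by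
        have := (abs_lt.mp hdt).1; linarith
      rw [_root_.abs_of_neg h, Real.sin_neg,
        _root_.abs_of_nonpos (Real.sin_nonpos_of_nonpos_of_neg_pi_le h.le hd0)]
  rw [h6] at h5
  linarith


/-- Two paths in the unit square joining opposite pairs of corners intersect. -/
theorem curves_intersect (f g : ℝ → E2)
    (hfc : ContinuousOn f (Icc 0 1)) (hgc : ContinuousOn g (Icc 0 1))
    (hfm : MapsTo f (Icc 0 1) unitSq) (hgm : MapsTo g (Icc 0 1) unitSq)
    (hf0 : f 0 = pt 0 0) (hf1 : f 1 = pt 1 1)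
    (hg0 : g 0 = pt 0 1) (hg1 : g 1 = pt 1 0) :
    ∃ s ∈ Icc (0:ℝ) 1, ∃ t ∈ Icc (0:ℝ) 1, f s = g t := by
  by_contra hcon
  push_neg at hcon
  have h01 : (0:ℝ) ≤ 1 := zero_le_one
  set fe : ℝ → E2 := IccExtend h01 ((Icc (0:ℝ) 1).restrict f) with hfedef
  set ge : ℝ → E2 := IccExtend h01 ((Icc (0:ℝ) 1).restrict g) with hgedef
  have hfeC : Continuous fe := hfc.restrict.Icc_extend'
  have hgeC : Continuous ge := hgc.restrict.Icc_extend'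
  have hfee : ∀ s ∈ Icc (0:ℝ) 1, fe s = f s := fun s hs => IccExtend_of_mem h01 _ hs
  have hgee : ∀ t ∈ Icc (0:ℝ) 1, ge t = g t := fun t ht => IccExtend_of_mem h01 _ ht
  have hfe_range : ∀ s, ∃ s' ∈ Icc (0:ℝ) 1, fe s = f s' :=
    fun s => ⟨projIcc 0 1 h01 s, (projIcc 0 1 h01 s).2, rfl⟩
  have hge_range : ∀ t, ∃ t' ∈ Icc (0:ℝ) 1, ge t = g t' :=
    fun t => ⟨projIcc 0 1 h01 t, (projIcc 0 1 h01 t).2, rfl⟩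
  set H : ℝ → ℝ → ℂ :=
    fun s t => ((fe s 0 - ge t 0 : ℝ) : ℂ) + ((fe s 1 - ge t 1 : ℝ) : ℂ) * Complex.I with hHdef
  have hHre : ∀ s t, (H s t).re = fe s 0 - ge t 0 := by
    intro s t; simp [hHdef]
  have hHim : ∀ s t, (H s t).im = fe s 1 - ge t 1 := by
    intro s t; simp [hHdef]
  have hHC : Continuous fun p : ℝ × ℝ => H p.1 p.2 := by
    apply Continuous.add
    · apply Complex.continuous_ofReal.comp
      exact ((EuclideanSpace.proj (0 : Fin 2)).continuous.comp (hfeC.comp continuous_fst)).sub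
        ((EuclideanSpace.proj (0 : Fin 2)).continuous.comp (hgeC.comp continuous_snd))
    · apply Continuous.mul ?_ continuous_const
      apply Complex.continuous_ofReal.comp
      exact ((EuclideanSpace.proj (1 : Fin 2)).continuous.comp (hfeC.comp continuous_fst)).sub
        ((EuclideanSpace.proj (1 : Fin 2)).continuous.comp (hgeC.comp continuous_snd))
  have hHne : ∀ s t, H s t ≠ 0 := by
    intro s t h
    obtain ⟨s', hs', hfs⟩ := hfe_range s
    obtain ⟨t', ht', hgt⟩ := hge_range t
    have hre : fe s 0 - ge t 0 = 0 := by rw [← hHre s t, h]; simp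
    have him : fe s 1 - ge t 1 = 0 := by rw [← hHim s t, h]; simp
    apply hcon s' hs' t' ht'
    rw [← hfs, ← hgt]
    ext i
    fin_cases i
    · simpa using sub_eq_zero.mp hre
    · simpa using sub_eq_zero.mp him
  -- corner values
  have hpt0 : ∀ x y : ℝ, pt x y 0 = x := fun x y => rfl
  have hpt1 : ∀ x y : ℝ, pt x y 1 = y := fun x y => rfl
  have h0I : (0:ℝ) ∈ Icc (0:ℝ) 1 := ⟨le_rfl, zero_le_one⟩
  have h1I : (1:ℝ) ∈ Icc (0:ℝ) 1 := ⟨zero_le_one, le_rfl⟩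
  have hH00 : H 0 0 = -Complex.I := by
    rw [hHdef]
    simp only [hfee 0 h0I, hgee 0 h0I, hf0, hg0, hpt0, hpt1]
    norm_num
  have hH10 : H 1 0 = 1 := by
    rw [hHdef]
    simp only [hfee 1 h1I, hgee 0 h0I, hf1, hg0, hpt0, hpt1]
    norm_num
  have hH11 : H 1 1 = Complex.I := by
    rw [hHdef]
    simp only [hfee 1 h1I, hgee 1 h1I, hf1, hg1, hpt0, hpt1]
    norm_num
  have hH01 : H 0 1 = -1 := by
    rw [hHdef]
    simp only [hfee 0 h0I, hgee 1 h1I, hf0, hg1, hpt0, hpt1]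
    norm_num
  -- membership facts
  have hfmem : ∀ s ∈ Icc (0:ℝ) 1, fe s 0 ∈ Icc (0:ℝ) 1 ∧ fe s 1 ∈ Icc (0:ℝ) 1 := by
    intro s hs; rw [hfee s hs]; exact ⟨(hfm hs).1, (hfm hs).2⟩
  have hgmem : ∀ t ∈ Icc (0:ℝ) 1, ge t 0 ∈ Icc (0:ℝ) 1 ∧ ge t 1 ∈ Icc (0:ℝ) 1 := by
    intro t ht; rw [hgee t ht]; exact ⟨(hgm ht).1, (hgm ht).2⟩
  have hge0 : ge 0 = pt 0 1 := by rw [hgee 0 h0I, hg0]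
  have hge1 : ge 1 = pt 1 0 := by rw [hgee 1 h1I, hg1]
  have hfe0 : fe 0 = pt 0 0 := by rw [hfee 0 h0I, hf0]
  have hfe1 : fe 1 = pt 1 1 := by rw [hfee 1 h1I, hf1]
  -- edge sign facts
  have hbot_re : ∀ s ∈ Icc (0:ℝ) 1, 0 ≤ (H s 0).re := by
    intro s hs; rw [hHre, hge0, hpt0]; linarith [(hfmem s hs).1.1]
  have hbot_im : ∀ s ∈ Icc (0:ℝ) 1, (H s 0).im ≤ 0 := by
    intro s hs; rw [hHim, hge0, hpt1]; linarith [(hfmem s hs).2.2]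
  have hright_re : ∀ t ∈ Icc (0:ℝ) 1, 0 ≤ (H 1 t).re := by
    intro t ht; rw [hHre, hfe1, hpt0]; linarith [(hgmem t ht).1.2]
  have hright_im : ∀ t ∈ Icc (0:ℝ) 1, 0 ≤ (H 1 t).im := by
    intro t ht; rw [hHim, hfe1, hpt1]; linarith [(hgmem t ht).2.2]
  have htop_re : ∀ s ∈ Icc (0:ℝ) 1, (H s 1).re ≤ 0 := by
    intro s hs; rw [hHre, hge1, hpt0]; linarith [(hfmem s hs).1.2]
  have htop_im : ∀ s ∈ Icc (0:ℝ) 1, 0 ≤ (H s 1).im := by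
    intro s hs; rw [hHim, hge1, hpt1]; linarith [(hfmem s hs).2.1]
  have hleft_re : ∀ t ∈ Icc (0:ℝ) 1, (H 0 t).re ≤ 0 := by
    intro t ht; rw [hHre, hfe0, hpt0]; linarith [(hgmem t ht).1.1]
  have hleft_im : ∀ t ∈ Icc (0:ℝ) 1, (H 0 t).im ≤ 0 := by
    intro t ht; rw [hHim, hfe0, hpt1]; linarith [(hgmem t ht).2.1]
  -- minimum of |H| on the square
  set K := (Icc (0:ℝ) 1) ×ˢ (Icc (0:ℝ) 1) with hKdef
  have hKc : IsCompact K := isCompact_Icc.prod isCompact_Icc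
  have hKne : K.Nonempty := ⟨(0,0), h0I, h0I⟩
  have habsC : Continuous fun p : ℝ × ℝ => ‖H p.1 p.2‖ :=
    continuous_norm.comp hHC
  obtain ⟨p₀, hp₀, hminp⟩ := hKc.exists_isMinOn hKne habsC.continuousOn
  rw [isMinOn_iff] at hminp
  set ε := ‖H p₀.1 p₀.2‖ with hεdef
  have hε : 0 < ε := norm_pos_iff.mpr (hHne _ _)
  have hεle : ∀ s ∈ Icc (0:ℝ) 1, ∀ t ∈ Icc (0:ℝ) 1, ε ≤ ‖H s t‖ := by
    intro s hs t ht
    exact hminp (s, t) ⟨hs, ht⟩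
  -- bottom lift
  have hγb : ContinuousOn (fun s => H s 0) (Icc 0 1) :=
    (hHC.comp (continuous_id.prodMk continuous_const)).continuousOn
  have hexp0 : Complex.exp (((-(π/2) : ℝ) : ℂ) * Complex.I)
      = H 0 0 / ‖H 0 0‖ := by
    rw [hH00]
    have h1 : ‖-Complex.I‖ = 1 := by simp
    rw [h1, Complex.ofReal_one, div_one]
    apply Complex.ext
    · rw [Complex.exp_ofReal_mul_I_re]; simp
    · rw [Complex.exp_ofReal_mul_I_im]; simp
  obtain ⟨β, hβc, hβ0, hβ⟩ := exists_lift hγb (fun s _ => hHne s 0) hexp0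
  -- vertical lifts
  have hlift : ∀ s, s ∈ Icc (0:ℝ) 1 → ∃ θ : ℝ → ℝ, ContinuousOn θ (Icc 0 1) ∧ θ 0 = β s ∧
      ∀ t ∈ Icc (0:ℝ) 1, Complex.exp ((θ t : ℝ) * Complex.I) = H s t / ‖H s t‖ := by
    intro s hs
    exact exists_lift ((hHC.comp (continuous_const.prodMk continuous_id)).continuousOn)
      (fun t _ => hHne s t) (hβ s hs)
  choose Θ hΘc hΘ0 hΘ using hlift
  set τ : ℝ → ℝ := fun s => if hs : s ∈ Icc (0:ℝ) 1 then Θ s hs 1 else 0 with hτdef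
  have hτeq : ∀ s (hs : s ∈ Icc (0:ℝ) 1), τ s = Θ s hs 1 := by
    intro s hs; rw [hτdef]; exact dif_pos hs
  -- cos/sin formulas
  have hcosβ : ∀ s ∈ Icc (0:ℝ) 1, Real.cos (β s) = (H s 0).re / ‖H s 0‖ := by
    intro s hs; rw [← Complex.exp_ofReal_mul_I_re, hβ s hs, Complex.div_ofReal_re]
  have hsinβ : ∀ s ∈ Icc (0:ℝ) 1, Real.sin (β s) = (H s 0).im / ‖H s 0‖ := by
    intro s hs; rw [← Complex.exp_ofReal_mul_I_im, hβ s hs, Complex.div_ofReal_im]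
  have hcosΘ : ∀ s (hs : s ∈ Icc (0:ℝ) 1), ∀ t ∈ Icc (0:ℝ) 1,
      Real.cos (Θ s hs t) = (H s t).re / ‖H s t‖ := by
    intro s hs t ht; rw [← Complex.exp_ofReal_mul_I_re, hΘ s hs t ht, Complex.div_ofReal_re]
  have hsinΘ : ∀ s (hs : s ∈ Icc (0:ℝ) 1), ∀ t ∈ Icc (0:ℝ) 1,
      Real.sin (Θ s hs t) = (H s t).im / ‖H s t‖ := by
    intro s hs t ht; rw [← Complex.exp_ofReal_mul_I_im, hΘ s hs t ht, Complex.div_ofReal_im]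
  have hπ := Real.pi_pos
  -- continuity of τ
  have hτc : ContinuousOn τ (Icc 0 1) := by
    rw [Metric.continuousOn_iff]
    intro s₀ hs₀ η hη
    set η' := min η (π/2) with hη'def
    have hη'pos : 0 < η' := lt_min hη (by linarith)
    have hη'2 : η' ≤ π/2 := min_le_right _ _
    have hsin' : 0 < Real.sin η' := Real.sin_pos_of_pos_of_lt_pi hη'pos (by linarith)
    have huc := hKc.uniformContinuousOn_of_continuous hHC.continuousOn
    rw [Metric.uniformContinuousOn_iff] at huc
    obtain ⟨δ₂, hδ₂, hδ₂'⟩ := huc ((ε/2) * Real.sin η') (by positivity)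
    have hβct := hβc s₀ hs₀
    rw [Metric.continuousWithinAt_iff] at hβct
    obtain ⟨δ₁, hδ₁, hδ₁'⟩ := hβct (π/2) (by linarith)
    refine ⟨min δ₁ δ₂, lt_min hδ₁ hδ₂, ?_⟩
    intro s hs hss
    have hd1 : dist s s₀ < δ₁ := lt_of_lt_of_le hss (min_le_left _ _)
    have hd2 : dist s s₀ < δ₂ := lt_of_lt_of_le hss (min_le_right _ _)
    set d : ℝ → ℝ := fun t => Θ s hs t - Θ s₀ hs₀ t with hddef
    set u : ℝ → ℂ := fun t =>
      (H s t / (‖H s t‖ : ℂ)) / (H s₀ t / (‖H s₀ t‖ : ℂ)) with hudef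
    have hdc : ContinuousOn d (Icc 0 1) := (hΘc s hs).sub (hΘc s₀ hs₀)
    have hdexp : ∀ t ∈ Icc (0:ℝ) 1, Complex.exp ((d t : ℝ) * Complex.I) = u t := by
      intro t ht
      have he : ((d t : ℝ) : ℂ) * Complex.I
          = ((Θ s hs t : ℝ) : ℂ) * Complex.I - ((Θ s₀ hs₀ t : ℝ) : ℂ) * Complex.I := by
        rw [hddef]; push_cast; ring
      rw [he, Complex.exp_sub, hΘ s hs t ht, hΘ s₀ hs₀ t ht, hudef]
    have huu : ∀ t ∈ Icc (0:ℝ) 1, ‖u t - 1‖ < Real.sin η' := by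
      intro t ht
      have hz1 : H s t ≠ 0 := hHne s t
      have hz2 : H s₀ t ≠ 0 := hHne s₀ t
      have hza : (‖H s₀ t‖ : ℂ) ≠ 0 := by
        simpa using norm_ne_zero_iff.mpr hz2
      have hz2' : H s₀ t / (‖H s₀ t‖ : ℂ) ≠ 0 := div_ne_zero hz2 hza
      have habs2 : ‖H s₀ t / (‖H s₀ t‖ : ℂ)‖ = 1 := by
        rw [norm_div, Complex.norm_real, Real.norm_eq_abs,
          _root_.abs_of_nonneg (norm_nonneg _), div_self (norm_ne_zero_iff.mpr hz2)]
      have hsplit : u t - 1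
          = ((H s t / (‖H s t‖ : ℂ)) - (H s₀ t / (‖H s₀ t‖ : ℂ)))
            / (H s₀ t / (‖H s₀ t‖ : ℂ)) := by
        rw [hudef]
        exact div_sub_one hz2'
      rw [hsplit, norm_div, habs2, div_one]
      refine lt_of_le_of_lt (unit_dist hz1 hz2) ?_
      have hdH : ‖H s t - H s₀ t‖ < ε/2 * Real.sin η' := by
        have hmemp : (s, t) ∈ K := ⟨hs, ht⟩
        have hmemp0 : (s₀, t) ∈ K := ⟨hs₀, ht⟩
        have hdp : dist ((s, t) : ℝ × ℝ) ((s₀, t) : ℝ × ℝ) < δ₂ := by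
          rw [Prod.dist_eq]
          simp only [dist_self]
          rw [max_eq_left dist_nonneg]
          exact hd2
        have := hδ₂' (s, t) hmemp (s₀, t) hmemp0 hdp
        rwa [Complex.dist_eq] at this
      have hA : ε ≤ ‖H s t‖ := hεle s hs t ht
      calc 2 * ‖H s t - H s₀ t‖ / ‖H s t‖
          ≤ 2 * ‖H s t - H s₀ t‖ / ε :=
            div_le_div_of_nonneg_left (by positivity) hε hA
        _ < 2 * (ε/2 * Real.sin η') / ε := by
            apply (div_lt_div_iff_of_pos_right hε).mpr
            linarith [hdH]
        _ = Real.sin η' := by field_simp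
    have h00 : |d 0| < π/2 := by
      have e1 : Θ s hs 0 = β s := hΘ0 s hs
      have e2 : Θ s₀ hs₀ 0 = β s₀ := hΘ0 s₀ hs₀
      have hb := hδ₁' hs hd1
      rw [hddef]
      simp only [e1, e2]
      rwa [Real.dist_eq] at hb
    have hcl := lift_close hdc hdexp hη'pos hη'2 huu h00 1 h1I
    rw [hτeq s hs, hτeq s₀ hs₀, Real.dist_eq]
    exact lt_of_lt_of_le hcl (min_le_left _ _)
  -- bottom edge confinement
  have hβmem : ∀ s ∈ Icc (0:ℝ) 1, β s ∈ Icc (-(π/2)) 0 := by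
    have key := conf_closed (d := fun s => β s + π/2) (hβc.add continuousOn_const)
      (by
        intro s hs
        rw [Real.sin_add_pi_div_two, hcosβ s hs]
        exact div_nonneg (hbot_re s hs) (norm_nonneg _))
      (by
        intro s hs
        rw [Real.cos_add_pi_div_two, hsinβ s hs, neg_nonneg]
        exact div_nonpos_of_nonpos_of_nonneg (hbot_im s hs) (norm_nonneg _))
      (by
        show β 0 + π/2 ∈ Icc 0 (π/2)
        rw [hβ0]; exact ⟨by linarith, by linarith⟩)
    intro s hs
    have h := key s hs
    exact ⟨by linarith [h.1], by linarith [h.2]⟩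
  have hβ1 : β 1 = 0 := by
    have hmem := hβmem 1 h1I
    have hsin1 : Real.sin (β 1) = 0 := by
      rw [hsinβ 1 h1I, hH10]; simp
    refine Real.strictMonoOn_sin.injOn ⟨hmem.1, by linarith [hmem.2]⟩
      ⟨by linarith, by linarith⟩ ?_
    rw [hsin1, Real.sin_zero]
  -- right edge
  have hR := conf_closed (d := Θ 1 h1I) (hΘc 1 h1I)
    (by
      intro t ht
      rw [hsinΘ 1 h1I t ht]
      exact div_nonneg (hright_im t ht) (norm_nonneg _))
    (by
      intro t ht
      rw [hcosΘ 1 h1I t ht]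
      exact div_nonneg (hright_re t ht) (norm_nonneg _))
    (by rw [hΘ0 1 h1I, hβ1]; exact ⟨le_rfl, by linarith⟩)
  have hτ1 : τ 1 = π/2 := by
    rw [hτeq 1 h1I]
    have hmem := hR 1 h1I
    have hsin1 : Real.sin (Θ 1 h1I 1) = 1 := by
      rw [hsinΘ 1 h1I 1 h1I, hH11]; simp
    refine Real.strictMonoOn_sin.injOn ⟨by linarith [hmem.1], hmem.2⟩
      ⟨by linarith, le_rfl⟩ ?_
    rw [hsin1, Real.sin_pi_div_two]
  -- cos/sin of τ
  have hcosτ : ∀ s (hs : s ∈ Icc (0:ℝ) 1),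
      Real.cos (τ s) = (H s 1).re / ‖H s 1‖ := by
    intro s hs; rw [hτeq s hs]; exact hcosΘ s hs 1 h1I
  have hsinτ : ∀ s (hs : s ∈ Icc (0:ℝ) 1),
      Real.sin (τ s) = (H s 1).im / ‖H s 1‖ := by
    intro s hs; rw [hτeq s hs]; exact hsinΘ s hs 1 h1I
  -- top edge (reversed)
  have hrev : ∀ s ∈ Icc (0:ℝ) 1, (1 - s) ∈ Icc (0:ℝ) 1 := by
    intro s hs; exact ⟨by linarith [hs.2], by linarith [hs.1]⟩
  have hT := conf_closed (d := fun s => τ (1 - s) - π/2)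
    ((hτc.comp ((continuous_const.sub continuous_id).continuousOn) hrev).sub continuousOn_const)
    (by
      intro s hs
      rw [Real.sin_sub_pi_div_two, hcosτ (1-s) (hrev s hs), neg_nonneg]
      exact div_nonpos_of_nonpos_of_nonneg (htop_re (1-s) (hrev s hs)) (norm_nonneg _))
    (by
      intro s hs
      rw [Real.cos_sub_pi_div_two, hsinτ (1-s) (hrev s hs)]
      exact div_nonneg (htop_im (1-s) (hrev s hs)) (norm_nonneg _))
    (by
      show τ (1 - 0) - π/2 ∈ Icc 0 (π/2)
      rw [show (1:ℝ) - 0 = 1 by norm_num, hτ1]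
      exact ⟨by linarith, by linarith⟩)
  have hτ0 : τ 0 = π := by
    have h : τ (1 - 1) - π/2 ∈ Icc 0 (π/2) := hT 1 h1I
    rw [show (1:ℝ) - 1 = 0 by norm_num] at h
    have hmem : τ 0 ∈ Icc (π/2) π := ⟨by linarith [h.1], by linarith [h.2]⟩
    have hcos0 : Real.cos (τ 0) = -1 := by
      rw [hcosτ 0 h0I, hH01]; simp
    refine Real.strictAntiOn_cos.injOn ⟨by linarith [hmem.1], hmem.2⟩
      ⟨by linarith, le_rfl⟩ ?_
    rw [hcos0, Real.cos_pi]
  -- left edge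
  have hL := conf_closed (d := fun t => Θ 0 h0I t + π) ((hΘc 0 h0I).add continuousOn_const)
    (by
      intro t ht
      rw [Real.sin_add_pi, hsinΘ 0 h0I t ht, neg_nonneg]
      exact div_nonpos_of_nonpos_of_nonneg (hleft_im t ht) (norm_nonneg _))
    (by
      intro t ht
      rw [Real.cos_add_pi, hcosΘ 0 h0I t ht, neg_nonneg]
      exact div_nonpos_of_nonpos_of_nonneg (hleft_re t ht) (norm_nonneg _))
    (by
      show Θ 0 h0I 0 + π ∈ Icc 0 (π/2)
      rw [hΘ0 0 h0I, hβ0]; exact ⟨by linarith, by linarith⟩)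
  have hfinal : Θ 0 h0I 1 + π ∈ Icc 0 (π/2) := hL 1 h1I
  rw [← hτeq 0 h0I, hτ0] at hfinal
  have := hfinal.2
  linarith
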